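/- An admissible tensor F on V satisfies F(x,φy,ξ) = F(y,φx,ξ) for all x,y ∈ V (i.e. the exterior derivative dη(x,y) = −F(x,φy,ξ) + F(y,φx,ξ) vanishes, so the structure 1-form η is closed) if and only if F = F₁ + F₂ + F₃ + F₄ + F₅ + F₆ + F₉ + F₁₀, the sum of its components corresponding to the classes 𝔽₁,…,𝔽₆, 𝔽₉, 𝔽₁₀. -/
import Mathlib


open scoped RealInnerProductSpace

noncomputable section

/-- An almost paracontact almost paracomplex structure compatible with the inner
product on a real inner product space `V` of dimension `2 * n + 1`. -/
structure APAP (n : ℕ) (V : Type*) [NormedAddCommGroup V] [InnerProductSpace ℝ V] where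
  phi : V →ₗ[ℝ] V
  xi : V
  eta : V →ₗ[ℝ] ℝ
  dim_eq : Module.finrank ℝ V = 2 * n + 1
  phi_xi : phi xi = 0
  phi_phi : ∀ x : V, phi (phi x) = x - eta x • xi
  eta_phi : ∀ x : V, eta (phi x) = 0
  eta_xi : eta xi = 1
  trace_phi : LinearMap.trace ℝ V phi = 0
  compat : ∀ x y : V, ⟪phi x, phi y⟫ = ⟪x, y⟫ - eta x * eta y
  inner_xi : ∀ x : V, ⟪x, xi⟫ = eta x

variable {n : ℕ} {V : Type*} [NormedAddCommGroup V] [InnerProductSpace ℝ V]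

/-- The defining symmetries of the fundamental tensor `F`. -/
def APAP.Admissible (S : APAP n V) (F : V →ₗ[ℝ] V →ₗ[ℝ] V →ₗ[ℝ] ℝ) : Prop :=
  (∀ x y z : V, F x y z = F x z y) ∧
  (∀ x y z : V, F x y z =
    -F x (S.phi y) (S.phi z) + S.eta y * F x S.xi z + S.eta z * F x y S.xi)

/-- The Nijenhuis tensor of `F`. -/
def APAP.nij (S : APAP n V) (F : V →ₗ[ℝ] V →ₗ[ℝ] V →ₗ[ℝ] ℝ) (x y z : V) : ℝ :=
  F (S.phi x) y z - F (S.phi y) x z - F x y (S.phi z) + F y x (S.phi z)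
    + S.eta z * (F x (S.phi y) S.xi - F y (S.phi x) S.xi)

/-- The associated Nijenhuis tensor of `F`. -/
def APAP.nijA (S : APAP n V) (F : V →ₗ[ℝ] V →ₗ[ℝ] V →ₗ[ℝ] ℝ) (x y z : V) : ℝ :=
  F (S.phi x) y z + F (S.phi y) x z - F x y (S.phi z) - F y x (S.phi z)
    + S.eta z * (F x (S.phi y) S.xi + F y (S.phi x) S.xi)

/-- The Lee form `θ` of `F` with respect to an orthonormal basis. -/
def APAP.leeTheta (S : APAP n V) (b : OrthonormalBasis (Fin (2 * n + 1)) ℝ V)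
    (F : V →ₗ[ℝ] V →ₗ[ℝ] V →ₗ[ℝ] ℝ) (z : V) : ℝ :=
  ∑ i, F (b i) (b i) z

/-- The Lee form `θ*` of `F` with respect to an orthonormal basis. -/
def APAP.leeThetaStar (S : APAP n V) (b : OrthonormalBasis (Fin (2 * n + 1)) ℝ V)
    (F : V →ₗ[ℝ] V →ₗ[ℝ] V →ₗ[ℝ] ℝ) (z : V) : ℝ :=
  ∑ i, F (b i) (S.phi (b i)) z

/-- The Lee form `ω` of `F`. -/
def APAP.leeOmega (S : APAP n V) (F : V →ₗ[ℝ] V →ₗ[ℝ] V →ₗ[ℝ] ℝ) (z : V) : ℝ :=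
  F S.xi S.xi z

/-- The component `F₁` of `F`. -/
def APAP.comp1 (S : APAP n V) (b : OrthonormalBasis (Fin (2 * n + 1)) ℝ V)
    (F : V →ₗ[ℝ] V →ₗ[ℝ] V →ₗ[ℝ] ℝ) (x y z : V) : ℝ :=
  (1 / (2 * (n : ℝ))) *
    (⟪S.phi x, S.phi y⟫ * S.leeTheta b F (S.phi (S.phi z))
      + ⟪S.phi x, S.phi z⟫ * S.leeTheta b F (S.phi (S.phi y))
      - ⟪x, S.phi y⟫ * S.leeTheta b F (S.phi z)
      - ⟪x, S.phi z⟫ * S.leeTheta b F (S.phi y))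

/-- The component `F₂` of `F`. -/
def APAP.comp2 (S : APAP n V) (b : OrthonormalBasis (Fin (2 * n + 1)) ℝ V)
    (F : V →ₗ[ℝ] V →ₗ[ℝ] V →ₗ[ℝ] ℝ) (x y z : V) : ℝ :=
  (1 / 4) * (2 * F (S.phi (S.phi x)) (S.phi (S.phi y)) (S.phi (S.phi z))
      + F (S.phi (S.phi y)) (S.phi (S.phi z)) (S.phi (S.phi x))
      + F (S.phi (S.phi z)) (S.phi (S.phi x)) (S.phi (S.phi y))
      - F (S.phi y) (S.phi z) (S.phi (S.phi x))
      - F (S.phi z) (S.phi y) (S.phi (S.phi x)))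
    - S.comp1 b F x y z

/-- The component `F₃` of `F`. -/
def APAP.comp3 (S : APAP n V)
    (F : V →ₗ[ℝ] V →ₗ[ℝ] V →ₗ[ℝ] ℝ) (x y z : V) : ℝ :=
  (1 / 4) * (2 * F (S.phi (S.phi x)) (S.phi (S.phi y)) (S.phi (S.phi z))
      - F (S.phi (S.phi y)) (S.phi (S.phi z)) (S.phi (S.phi x))
      - F (S.phi (S.phi z)) (S.phi (S.phi x)) (S.phi (S.phi y))
      + F (S.phi y) (S.phi z) (S.phi (S.phi x))
      + F (S.phi z) (S.phi y) (S.phi (S.phi x)))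

/-- The component `F₄` of `F`. -/
def APAP.comp4 (S : APAP n V) (b : OrthonormalBasis (Fin (2 * n + 1)) ℝ V)
    (F : V →ₗ[ℝ] V →ₗ[ℝ] V →ₗ[ℝ] ℝ) (x y z : V) : ℝ :=
  (S.leeTheta b F S.xi / (2 * (n : ℝ))) *
    (⟪S.phi x, S.phi y⟫ * S.eta z + ⟪S.phi x, S.phi z⟫ * S.eta y)

/-- The component `F₅` of `F`. -/
def APAP.comp5 (S : APAP n V) (b : OrthonormalBasis (Fin (2 * n + 1)) ℝ V)
    (F : V →ₗ[ℝ] V →ₗ[ℝ] V →ₗ[ℝ] ℝ) (x y z : V) : ℝ :=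
  (S.leeThetaStar b F S.xi / (2 * (n : ℝ))) *
    (⟪x, S.phi y⟫ * S.eta z + ⟪x, S.phi z⟫ * S.eta y)

/-- The component `F₆` of `F`. -/
def APAP.comp6 (S : APAP n V) (b : OrthonormalBasis (Fin (2 * n + 1)) ℝ V)
    (F : V →ₗ[ℝ] V →ₗ[ℝ] V →ₗ[ℝ] ℝ) (x y z : V) : ℝ :=
  (1 / 4) * ((F (S.phi (S.phi x)) (S.phi (S.phi y)) S.xi + F (S.phi (S.phi y)) (S.phi (S.phi x)) S.xi
        + F (S.phi x) (S.phi y) S.xi + F (S.phi y) (S.phi x) S.xi) * S.eta z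
      + (F (S.phi (S.phi x)) (S.phi (S.phi z)) S.xi + F (S.phi (S.phi z)) (S.phi (S.phi x)) S.xi
        + F (S.phi x) (S.phi z) S.xi + F (S.phi z) (S.phi x) S.xi) * S.eta y)
    - S.comp4 b F x y z - S.comp5 b F x y z

/-- The component `F₇` of `F`. -/
def APAP.comp7 (S : APAP n V)
    (F : V →ₗ[ℝ] V →ₗ[ℝ] V →ₗ[ℝ] ℝ) (x y z : V) : ℝ :=
  (1 / 4) * ((F (S.phi (S.phi x)) (S.phi (S.phi y)) S.xi - F (S.phi (S.phi y)) (S.phi (S.phi x)) S.xi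
        + F (S.phi x) (S.phi y) S.xi - F (S.phi y) (S.phi x) S.xi) * S.eta z
      + (F (S.phi (S.phi x)) (S.phi (S.phi z)) S.xi - F (S.phi (S.phi z)) (S.phi (S.phi x)) S.xi
        + F (S.phi x) (S.phi z) S.xi - F (S.phi z) (S.phi x) S.xi) * S.eta y)

/-- The component `F₈` of `F`. -/
def APAP.comp8 (S : APAP n V)
    (F : V →ₗ[ℝ] V →ₗ[ℝ] V →ₗ[ℝ] ℝ) (x y z : V) : ℝ :=
  (1 / 4) * ((F (S.phi (S.phi x)) (S.phi (S.phi y)) S.xi + F (S.phi (S.phi y)) (S.phi (S.phi x)) S.xi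
        - F (S.phi x) (S.phi y) S.xi - F (S.phi y) (S.phi x) S.xi) * S.eta z
      + (F (S.phi (S.phi x)) (S.phi (S.phi z)) S.xi + F (S.phi (S.phi z)) (S.phi (S.phi x)) S.xi
        - F (S.phi x) (S.phi z) S.xi - F (S.phi z) (S.phi x) S.xi) * S.eta y)

/-- The component `F₉` of `F`. -/
def APAP.comp9 (S : APAP n V)
    (F : V →ₗ[ℝ] V →ₗ[ℝ] V →ₗ[ℝ] ℝ) (x y z : V) : ℝ :=
  (1 / 4) * ((F (S.phi (S.phi x)) (S.phi (S.phi y)) S.xi - F (S.phi (S.phi y)) (S.phi (S.phi x)) S.xi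
        - F (S.phi x) (S.phi y) S.xi + F (S.phi y) (S.phi x) S.xi) * S.eta z
      + (F (S.phi (S.phi x)) (S.phi (S.phi z)) S.xi - F (S.phi (S.phi z)) (S.phi (S.phi x)) S.xi
        - F (S.phi x) (S.phi z) S.xi + F (S.phi z) (S.phi x) S.xi) * S.eta y)

/-- The component `F₁₀` of `F`. -/
def APAP.comp10 (S : APAP n V)
    (F : V →ₗ[ℝ] V →ₗ[ℝ] V →ₗ[ℝ] ℝ) (x y z : V) : ℝ :=
  S.eta x * F S.xi (S.phi (S.phi y)) (S.phi (S.phi z))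

/-- The component `F₁₁` of `F`. -/
def APAP.comp11 (S : APAP n V)
    (F : V →ₗ[ℝ] V →ₗ[ℝ] V →ₗ[ℝ] ℝ) (x y z : V) : ℝ :=
  S.eta x * (S.eta y * S.leeOmega F z + S.eta z * S.leeOmega F y)

/-- `dη = 0` iff `F = F₁ + F₂ + F₃ + F₄ + F₅ + F₆ + F₉ + F₁₀`. -/
theorem statement16 (hn : 1 ≤ n) (S : APAP n V)
    (b : OrthonormalBasis (Fin (2 * n + 1)) ℝ V)
    (F : V →ₗ[ℝ] V →ₗ[ℝ] V →ₗ[ℝ] ℝ) (hF : S.Admissible F) :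
    (∀ x y : V, F x (S.phi y) S.xi = F y (S.phi x) S.xi) ↔
      (∀ x y z : V, F x y z = S.comp1 b F x y z + S.comp2 b F x y z + S.comp3 F x y z
        + S.comp4 b F x y z + S.comp5 b F x y z + S.comp6 b F x y z
        + S.comp9 F x y z + S.comp10 F x y z) := by
  have phi3 : ∀ w : V, S.phi (S.phi (S.phi w)) = S.phi w := fun w => by
    rw [S.phi_phi w, map_sub, map_smul, S.phi_xi, smul_zero, sub_zero]
  have phi2xi : S.phi (S.phi S.xi) = 0 := by
    rw [S.phi_phi, S.eta_xi, one_smul, sub_self]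
  have hFxx : ∀ w : V, F w S.xi S.xi = 0 := fun w => by
    have h := hF.2 w S.xi S.xi
    rw [S.phi_xi, S.eta_xi] at h
    simp only [map_zero, LinearMap.zero_apply] at h
    linarith
  have lt0 : S.leeTheta b F 0 = 0 := by
    simp [APAP.leeTheta]
  constructor
  · intro h x y z
    have hx : ∀ w : V, w = S.phi (S.phi w) + S.eta w • S.xi := fun w => by
      rw [S.phi_phi w]; abel
    have hexp : F x y z = F (S.phi (S.phi x)) (S.phi (S.phi y)) (S.phi (S.phi z))
        + S.eta z * F (S.phi (S.phi x)) (S.phi (S.phi y)) S.xi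
        + S.eta y * F (S.phi (S.phi x)) (S.phi (S.phi z)) S.xi
        + S.eta x * F S.xi (S.phi (S.phi y)) (S.phi (S.phi z))
        + S.eta x * S.eta z * F S.xi (S.phi (S.phi y)) S.xi
        + S.eta x * S.eta y * F S.xi S.xi (S.phi (S.phi z)) := by
      conv_lhs => rw [hx x, hx y, hx z]
      simp only [map_add, map_smul, LinearMap.add_apply, LinearMap.smul_apply, smul_eq_mul]
      have h1 := hFxx (S.phi (S.phi x))
      have h2 := hFxx S.xi
      have h3 := hF.1 (S.phi (S.phi x)) S.xi (S.phi (S.phi z))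
      linear_combination (S.eta y * S.eta z) * h1 + (S.eta x * S.eta y * S.eta z) * h2
        + S.eta y * h3
    have he1 : F (S.phi (S.phi x)) (S.phi (S.phi y)) S.xi = F (S.phi y) (S.phi x) S.xi := by
      have h' := h (S.phi (S.phi x)) (S.phi y)
      rwa [phi3] at h'
    have he2 : F (S.phi (S.phi x)) (S.phi (S.phi z)) S.xi = F (S.phi z) (S.phi x) S.xi := by
      have h' := h (S.phi (S.phi x)) (S.phi z)
      rwa [phi3] at h'
    have hw1 : F S.xi (S.phi (S.phi y)) S.xi = 0 := by
      have h' := h S.xi (S.phi y)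
      rw [S.phi_xi] at h'
      simpa using h'
    have hw2 : F S.xi S.xi (S.phi (S.phi z)) = 0 := by
      rw [hF.1 S.xi S.xi (S.phi (S.phi z))]
      have h' := h S.xi (S.phi z)
      rw [S.phi_xi] at h'
      simpa using h'
    simp only [APAP.comp1, APAP.comp2, APAP.comp3, APAP.comp4, APAP.comp5, APAP.comp6,
      APAP.comp9, APAP.comp10]
    linear_combination hexp + (S.eta z / 2) * he1 + (S.eta y / 2) * he2
      + (S.eta x * S.eta z) * hw1 + (S.eta x * S.eta y) * hw2
  · intro h x y
    rw [h x (S.phi y) S.xi, h y (S.phi x) S.xi]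
    simp only [APAP.comp1, APAP.comp2, APAP.comp3, APAP.comp4, APAP.comp5, APAP.comp6,
      APAP.comp9, APAP.comp10, phi3, phi2xi, S.phi_xi, S.eta_phi, S.eta_xi, map_zero,
      LinearMap.zero_apply, inner_zero_right, inner_zero_left, lt0, mul_zero, zero_mul,
      mul_one, add_zero, zero_add, sub_zero, neg_zero]
    ring
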